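/- arXiv:2406.17273 — 5 statements merged into one kernel-verified Lean document; each statement's English description precedes it below -/
import Mathlib

section
/- Let E : ℝⁿ → ℝⁿ, M a nonempty open E-invex subset of ℝⁿ, and f : M → ℝ an E-differentiable exponentially E-invex function on M with respect to η. Then for all x, x₀ ∈ M, (∇f(E(x))·e^{f(E(x))} − ∇f(E(x₀))·e^{f(E(x₀))}) · η(E(x), E(x₀)) ≥ 0. -/
open Real

theorem exp_E_invex_monotonicity {n : ℕ}
    (E : (Fin n → ℝ) → (Fin n → ℝ)) (M : Set (Fin n → ℝ))
    (η : (Fin n → ℝ) → (Fin n → ℝ) → (Fin n → ℝ)) (f : (Fin n → ℝ) → ℝ)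
    (hM : M.Nonempty) (hopen : IsOpen M)
    (hinvex : ∀ x ∈ M, ∀ x₀ ∈ M, ∀ τ ∈ Set.Icc (0:ℝ) 1,
      E x₀ + τ • η (E x) (E x₀) ∈ M)
    (hdiff : ∀ x ∈ M, DifferentiableAt ℝ (f ∘ E) x)
    (hskew : ∀ x ∈ M, ∀ x₀ ∈ M, η (E x₀) (E x) = - η (E x) (E x₀))
    (hEinvex : ∀ x ∈ M, ∀ x₀ ∈ M,
      exp (f (E x)) - exp (f (E x₀)) ≥
        exp (f (E x₀)) * fderiv ℝ (f ∘ E) x₀ (η (E x) (E x₀))) :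
    ∀ x ∈ M, ∀ x₀ ∈ M,
      exp (f (E x)) * fderiv ℝ (f ∘ E) x (η (E x) (E x₀)) -
        exp (f (E x₀)) * fderiv ℝ (f ∘ E) x₀ (η (E x) (E x₀)) ≥ 0 := by
  intro x hx x₀ hx₀
  have h1 := hEinvex x hx x₀ hx₀
  have h2 := hEinvex x₀ hx₀ x hx
  rw [hskew x hx x₀ hx₀, map_neg] at h2
  linarith
end

section
/- Let E : ℝⁿ → ℝⁿ, M a nonempty open E-invex subset of ℝⁿ, and f : M → ℝ an E-differentiable exponentially strictly E-invex function on M with respect to a skew-symmetric η. Then for all x, x₀ ∈ M with x ≠ x₀, (∇f(E(x))·e^{f(E(x))} − ∇f(E(x₀))·e^{f(E(x₀))}) · η(E(x), E(x₀)) > 0. -/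
open Real

theorem exp_strictly_E_invex_strict_monotonicity {n : ℕ}
    (E : (Fin n → ℝ) → (Fin n → ℝ)) (M : Set (Fin n → ℝ))
    (η : (Fin n → ℝ) → (Fin n → ℝ) → (Fin n → ℝ)) (f : (Fin n → ℝ) → ℝ)
    (hM : M.Nonempty) (hopen : IsOpen M)
    (hinvex : ∀ x ∈ M, ∀ x₀ ∈ M, ∀ τ ∈ Set.Icc (0:ℝ) 1,
      E x₀ + τ • η (E x) (E x₀) ∈ M)
    (hdiff : ∀ x ∈ M, DifferentiableAt ℝ (f ∘ E) x)
    (hskew : ∀ x ∈ M, ∀ x₀ ∈ M, η (E x₀) (E x) = - η (E x) (E x₀))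
    (hEinvex : ∀ x ∈ M, ∀ x₀ ∈ M, x ≠ x₀ →
      exp (f (E x)) - exp (f (E x₀)) >
        exp (f (E x₀)) * fderiv ℝ (f ∘ E) x₀ (η (E x) (E x₀))) :
    ∀ x ∈ M, ∀ x₀ ∈ M, x ≠ x₀ →
      exp (f (E x)) * fderiv ℝ (f ∘ E) x (η (E x) (E x₀)) -
        exp (f (E x₀)) * fderiv ℝ (f ∘ E) x₀ (η (E x) (E x₀)) > 0 := by
  intro x hx x₀ hx₀ hne
  have h1 := hEinvex x hx x₀ hx₀ hne
  have h2 := hEinvex x₀ hx₀ x hx hne.symm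
  rw [hskew x hx x₀ hx₀, map_neg] at h2
  linarith
end

section
/- Sufficiency of E-KKT conditions under exponential E-invexity: Consider the vector optimization problem minimize f(x) = (f₁(x),…,f_p(x)) subject to g_k(x) ≤ 0 (k = 1,…,m) and h_j(x) = 0 (j = 1,…,q), where all functions are E-differentiable. Suppose (E(ȳ), τ̄, ρ̄, ξ̄) satisfies the E-KKT conditions: Σᵢ τ̄ᵢ ∇fᵢ(E(ȳ)) + Σₖ ρ̄ₖ ∇gₖ(E(ȳ)) + Σⱼ ξ̄ⱼ ∇hⱼ(E(ȳ)) = 0, ρ̄ₖ gₖ(E(ȳ)) = 0 for all k, τ̄ ≥ 0 with τ̄ ≠ 0, ρ̄ ≥ 0. If each fᵢ is exponentially E-invex at ȳ, each gₖ with k active at E(ȳ) is exponentially E-invex at ȳ, each hⱼ with ξ̄ⱼ > 0 is exponentially E-invex at ȳ, and each −hⱼ with ξ̄ⱼ < 0 is exponentially E-invex at ȳ (all with respect to the same η on the E-feasible set Ω_E), then E(ȳ) is a weak E-Pareto solution: there is no feasible E(x) with fᵢ(E(x)) < fᵢ(E(ȳ)) for all i. -/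
open Real

theorem EKKT_sufficiency_weak_E_Pareto {n p m q : ℕ}
    (E : (Fin n → ℝ) → (Fin n → ℝ))
    (f : Fin p → (Fin n → ℝ) → ℝ) (g : Fin m → (Fin n → ℝ) → ℝ)
    (h : Fin q → (Fin n → ℝ) → ℝ)
    (η : (Fin n → ℝ) → (Fin n → ℝ) → (Fin n → ℝ))
    (hE : Function.Bijective E)
    (ΩE : Set (Fin n → ℝ))
    (hΩE : ΩE = {x | (∀ k, g k (E x) ≤ 0) ∧ ∀ j, h j (E x) = 0})
    (ybar : Fin n → ℝ) (hfeas : ybar ∈ ΩE)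
    (τbar : Fin p → ℝ) (ρbar : Fin m → ℝ) (ξbar : Fin q → ℝ)
    (hdf : ∀ i, DifferentiableAt ℝ (fun z => f i (E z)) ybar)
    (hdg : ∀ k, DifferentiableAt ℝ (fun z => g k (E z)) ybar)
    (hdh : ∀ j, DifferentiableAt ℝ (fun z => h j (E z)) ybar)
    (hstat : (∑ i, τbar i • fderiv ℝ (fun z => f i (E z)) ybar) +
        (∑ k, ρbar k • fderiv ℝ (fun z => g k (E z)) ybar) +
        (∑ j, ξbar j • fderiv ℝ (fun z => h j (E z)) ybar) = 0)
    (hslack : ∀ k, ρbar k * g k (E ybar) = 0)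
    (hτ : ∀ i, 0 ≤ τbar i) (hτne : τbar ≠ 0) (hρ : ∀ k, 0 ≤ ρbar k)
    (hfinvex : ∀ i, ∀ x ∈ ΩE,
      exp (f i (E x)) - exp (f i (E ybar)) ≥
        exp (f i (E ybar)) * fderiv ℝ (fun z => f i (E z)) ybar (η (E x) (E ybar)))
    (hginvex : ∀ k, g k (E ybar) = 0 → ∀ x ∈ ΩE,
      exp (g k (E x)) - exp (g k (E ybar)) ≥
        exp (g k (E ybar)) * fderiv ℝ (fun z => g k (E z)) ybar (η (E x) (E ybar)))
    (hhinvex : ∀ j, 0 < ξbar j → ∀ x ∈ ΩE,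
      exp (h j (E x)) - exp (h j (E ybar)) ≥
        exp (h j (E ybar)) * fderiv ℝ (fun z => h j (E z)) ybar (η (E x) (E ybar)))
    (hnhinvex : ∀ j, ξbar j < 0 → ∀ x ∈ ΩE,
      exp (-h j (E x)) - exp (-h j (E ybar)) ≥
        exp (-h j (E ybar)) * fderiv ℝ (fun z => -h j (E z)) ybar (η (E x) (E ybar))) :
    ¬ ∃ x ∈ ΩE, ∀ i, f i (E x) < f i (E ybar) := by

  rintro ⟨x, hx, hlt⟩
  set v := η (E x) (E ybar) with hv
  have hgx : ∀ k, g k (E x) ≤ 0 := (hΩE ▸ hx).1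
  have hhx : ∀ j, h j (E x) = 0 := (hΩE ▸ hx).2
  have hgy : ∀ k, g k (E ybar) ≤ 0 := (hΩE ▸ hfeas).1
  have hhy : ∀ j, h j (E ybar) = 0 := (hΩE ▸ hfeas).2
  -- f part
  have hfneg : ∀ i, fderiv ℝ (fun z => f i (E z)) ybar v < 0 := by
    intro i
    have h1 := hfinvex i x hx
    have h2 : exp (f i (E x)) - exp (f i (E ybar)) < 0 := by
      have := Real.exp_lt_exp.mpr (hlt i); linarith
    have h3 : (0:ℝ) < exp (f i (E ybar)) := Real.exp_pos _
    nlinarith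
  have hA : (∑ i, τbar i * fderiv ℝ (fun z => f i (E z)) ybar v) < 0 := by
    obtain ⟨i0, hi0⟩ : ∃ i, τbar i ≠ 0 := by
      by_contra hc; push_neg at hc; exact hτne (funext hc)
    have hi0' : 0 < τbar i0 := lt_of_le_of_ne (hτ i0) (Ne.symm hi0)
    have := Finset.sum_lt_sum (f := fun i => τbar i * fderiv ℝ (fun z => f i (E z)) ybar v)
      (g := fun _ => (0:ℝ)) (s := Finset.univ)
      (fun i _ => mul_nonpos_of_nonneg_of_nonpos (hτ i) (le_of_lt (hfneg i)))
      ⟨i0, Finset.mem_univ _, mul_neg_of_pos_of_neg hi0' (hfneg i0)⟩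
    simpa using this
  -- g part
  have hB : (∑ k, ρbar k * fderiv ℝ (fun z => g k (E z)) ybar v) ≤ 0 := by
    apply Finset.sum_nonpos
    intro k _
    rcases eq_or_lt_of_le (hρ k) with hk | hk
    · rw [← hk]; simp
    · have hgky : g k (E ybar) = 0 := by
        have := hslack k
        rcases mul_eq_zero.mp this with h' | h'
        · exact absurd h' (ne_of_gt hk)
        · exact h'
      have h1 := hginvex k hgky x hx
      rw [hgky] at h1
      have h2 : exp (g k (E x)) ≤ 1 := Real.exp_le_one_iff.mpr (hgx k)
      have h3 : fderiv ℝ (fun z => g k (E z)) ybar v ≤ 0 := by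
        simp only [Real.exp_zero, one_mul] at h1; linarith
      exact mul_nonpos_of_nonneg_of_nonpos (hρ k) h3
  -- h part
  have hC : (∑ j, ξbar j * fderiv ℝ (fun z => h j (E z)) ybar v) ≤ 0 := by
    apply Finset.sum_nonpos
    intro j _
    rcases lt_trichotomy (ξbar j) 0 with hj | hj | hj
    · have h1 := hnhinvex j hj x hx
      rw [hhx j, hhy j] at h1
      have hder : fderiv ℝ (fun z => -h j (E z)) ybar v
          = -(fderiv ℝ (fun z => h j (E z)) ybar v) := by
        rw [fderiv_fun_neg]; simp
      rw [hder] at h1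
      simp only [neg_zero, Real.exp_zero, one_mul, sub_self] at h1
      have : 0 ≤ fderiv ℝ (fun z => h j (E z)) ybar v := by linarith
      exact mul_nonpos_of_nonpos_of_nonneg (le_of_lt hj) this
    · rw [hj]; simp
    · have h1 := hhinvex j hj x hx
      rw [hhx j, hhy j] at h1
      simp only [Real.exp_zero, one_mul, sub_self] at h1
      have : fderiv ℝ (fun z => h j (E z)) ybar v ≤ 0 := by linarith
      exact mul_nonpos_of_nonneg_of_nonpos (le_of_lt hj) this
  have hzero := DFunLike.congr_fun hstat v
  simp only [ContinuousLinearMap.add_apply, ContinuousLinearMap.coe_sum',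
    Finset.sum_apply, ContinuousLinearMap.coe_smul', Pi.smul_apply, smul_eq_mul,
    ContinuousLinearMap.zero_apply] at hzero
  linarith
end

section
/- Sufficiency of E-KKT conditions under strict exponential E-invexity: With the same setup as the weak case, suppose (E(ȳ), τ̄, ρ̄, ξ̄) satisfies the E-KKT conditions, each fᵢ is exponentially strictly E-invex at ȳ on Ω_E, each active gₖ is exponentially E-invex at ȳ on Ω_E, each hⱼ with ξ̄ⱼ > 0 is exponentially E-invex, and each −hⱼ with ξ̄ⱼ < 0 is exponentially E-invex (all with respect to the same η). Then E(ȳ) is an E-Pareto solution: there is no feasible E(x) with f(E(x)) ≤ f(E(ȳ)) componentwise and f(E(x)) ≠ f(E(ȳ)). -/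
open Real

theorem EKKT_sufficiency_E_Pareto {n p m q : ℕ}
    (E : (Fin n → ℝ) → (Fin n → ℝ))
    (f : Fin p → (Fin n → ℝ) → ℝ) (g : Fin m → (Fin n → ℝ) → ℝ)
    (h : Fin q → (Fin n → ℝ) → ℝ)
    (η : (Fin n → ℝ) → (Fin n → ℝ) → (Fin n → ℝ))
    (hE : Function.Bijective E)
    (ΩE : Set (Fin n → ℝ))
    (hΩE : ΩE = {x | (∀ k, g k (E x) ≤ 0) ∧ ∀ j, h j (E x) = 0})
    (ybar : Fin n → ℝ) (hfeas : ybar ∈ ΩE)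
    (τbar : Fin p → ℝ) (ρbar : Fin m → ℝ) (ξbar : Fin q → ℝ)
    (hdf : ∀ i, DifferentiableAt ℝ (fun z => f i (E z)) ybar)
    (hdg : ∀ k, DifferentiableAt ℝ (fun z => g k (E z)) ybar)
    (hdh : ∀ j, DifferentiableAt ℝ (fun z => h j (E z)) ybar)
    (hstat : (∑ i, τbar i • fderiv ℝ (fun z => f i (E z)) ybar) +
        (∑ k, ρbar k • fderiv ℝ (fun z => g k (E z)) ybar) +
        (∑ j, ξbar j • fderiv ℝ (fun z => h j (E z)) ybar) = 0)
    (hslack : ∀ k, ρbar k * g k (E ybar) = 0)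
    (hτ : ∀ i, 0 ≤ τbar i) (hτne : τbar ≠ 0) (hρ : ∀ k, 0 ≤ ρbar k)
    (hfinvex : ∀ i, ∀ x ∈ ΩE, x ≠ ybar →
      exp (f i (E x)) - exp (f i (E ybar)) >
        exp (f i (E ybar)) * fderiv ℝ (fun z => f i (E z)) ybar (η (E x) (E ybar)))
    (hginvex : ∀ k, g k (E ybar) = 0 → ∀ x ∈ ΩE,
      exp (g k (E x)) - exp (g k (E ybar)) ≥
        exp (g k (E ybar)) * fderiv ℝ (fun z => g k (E z)) ybar (η (E x) (E ybar)))
    (hhinvex : ∀ j, 0 < ξbar j → ∀ x ∈ ΩE,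
      exp (h j (E x)) - exp (h j (E ybar)) ≥
        exp (h j (E ybar)) * fderiv ℝ (fun z => h j (E z)) ybar (η (E x) (E ybar)))
    (hnhinvex : ∀ j, ξbar j < 0 → ∀ x ∈ ΩE,
      exp (-h j (E x)) - exp (-h j (E ybar)) ≥
        exp (-h j (E ybar)) * fderiv ℝ (fun z => -h j (E z)) ybar (η (E x) (E ybar))) :
    ¬ ∃ x ∈ ΩE, (∀ i, f i (E x) ≤ f i (E ybar)) ∧ (∃ i, f i (E x) < f i (E ybar)) := by

  rintro ⟨x, hx, hle, i0, hi0⟩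
  by_cases hxy : x = ybar
  · rw [hxy] at hi0; exact lt_irrefl _ hi0
  set v := η (E x) (E ybar) with hv
  -- evaluate stationarity at v
  have hstatv : (∑ i, τbar i * fderiv ℝ (fun z => f i (E z)) ybar v) +
      (∑ k, ρbar k * fderiv ℝ (fun z => g k (E z)) ybar v) +
      (∑ j, ξbar j * fderiv ℝ (fun z => h j (E z)) ybar v) = 0 := by
    have := congrArg (fun L : (Fin n → ℝ) →L[ℝ] ℝ => L v) hstat
    simpa [ContinuousLinearMap.sum_apply, ContinuousLinearMap.smul_apply,
      smul_eq_mul] using this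
  -- feasibility facts
  have hxg : ∀ k, g k (E x) ≤ 0 := by rw [hΩE] at hx; exact hx.1
  have hxh : ∀ j, h j (E x) = 0 := by rw [hΩE] at hx; exact hx.2
  have hyg : ∀ k, g k (E ybar) ≤ 0 := by rw [hΩE] at hfeas; exact hfeas.1
  have hyh : ∀ j, h j (E ybar) = 0 := by rw [hΩE] at hfeas; exact hfeas.2
  -- f terms
  have hfneg : ∀ i, fderiv ℝ (fun z => f i (E z)) ybar v < 0 := by
    intro i
    have h1 := hfinvex i x hx hxy
    have h2 : exp (f i (E x)) ≤ exp (f i (E ybar)) := exp_le_exp.2 (hle i)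
    nlinarith [exp_pos (f i (E ybar))]
  have hfterm : ∀ i, τbar i * fderiv ℝ (fun z => f i (E z)) ybar v ≤ 0 := fun i =>
    mul_nonpos_of_nonneg_of_nonpos (hτ i) (hfneg i).le
  obtain ⟨i1, hi1⟩ : ∃ i, 0 < τbar i := by
    by_contra hc
    push_neg at hc
    exact hτne (funext fun i => le_antisymm (hc i) (hτ i))
  have hfsum : (∑ i, τbar i * fderiv ℝ (fun z => f i (E z)) ybar v) < 0 := by
    have hlt : τbar i1 * fderiv ℝ (fun z => f i1 (E z)) ybar v < 0 :=
      mul_neg_of_pos_of_neg hi1 (hfneg i1)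
    calc (∑ i, τbar i * fderiv ℝ (fun z => f i (E z)) ybar v)
        < ∑ _i : Fin p, (0:ℝ) :=
          Finset.sum_lt_sum (fun i _ => hfterm i) ⟨i1, Finset.mem_univ i1, hlt⟩
      _ = 0 := by simp
  -- g terms
  have hgterm : ∀ k, ρbar k * fderiv ℝ (fun z => g k (E z)) ybar v ≤ 0 := by
    intro k
    rcases eq_or_lt_of_le (hρ k) with hk | hk
    · simp [← hk]
    · have hg0 : g k (E ybar) = 0 := by
        have := hslack k; nlinarith
      have h1 := hginvex k hg0 x hx
      have h2 : exp (g k (E x)) ≤ 1 := by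
        rw [show (1:ℝ) = exp 0 by simp]; exact exp_le_exp.2 (hxg k)
      rw [hg0] at h1; simp at h1
      have : fderiv ℝ (fun z => g k (E z)) ybar v ≤ 0 := by nlinarith
      exact mul_nonpos_of_nonneg_of_nonpos (hρ k) this
  -- h terms
  have hhterm : ∀ j, ξbar j * fderiv ℝ (fun z => h j (E z)) ybar v ≤ 0 := by
    intro j
    rcases lt_trichotomy (ξbar j) 0 with hj | hj | hj
    · have h1 := hnhinvex j hj x hx
      rw [hxh j, hyh j] at h1
      have hD : fderiv ℝ (fun z => -h j (E z)) ybar =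
          -fderiv ℝ (fun z => h j (E z)) ybar := by
        have : (fun z => -h j (E z)) = fun z => -(fun z => h j (E z)) z := rfl
        rw [this, fderiv_fun_neg]
      rw [hD] at h1
      simp at h1
      have : 0 ≤ fderiv ℝ (fun z => h j (E z)) ybar v := by nlinarith
      exact mul_nonpos_of_nonpos_of_nonneg hj.le this
    · simp [hj]
    · have h1 := hhinvex j hj x hx
      rw [hxh j, hyh j] at h1
      simp at h1
      have : fderiv ℝ (fun z => h j (E z)) ybar v ≤ 0 := by nlinarith
      exact mul_nonpos_of_nonneg_of_nonpos hj.le this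
  have hgsum : (∑ k, ρbar k * fderiv ℝ (fun z => g k (E z)) ybar v) ≤ 0 :=
    Finset.sum_nonpos fun k _ => hgterm k
  have hhsum : (∑ j, ξbar j * fderiv ℝ (fun z => h j (E z)) ybar v) ≤ 0 :=
    Finset.sum_nonpos fun j _ => hhterm j
  linarith
end

section
/- Sufficiency of E-KKT conditions under generalized exponential E-invexity: With the same multiobjective setup, suppose (E(ȳ), τ̄, ρ̄, ξ̄) satisfies the E-KKT conditions, each fᵢ is exponentially pseudo-E-invex at ȳ on Ω_E, each active gₖ is exponentially quasi-E-invex at ȳ on Ω_E, each hⱼ with ξ̄ⱼ > 0 is exponentially quasi-E-invex at ȳ, and each −hⱼ with ξ̄ⱼ < 0 is exponentially quasi-E-invex at ȳ (all with respect to the same η). Then E(ȳ) is a weak E-Pareto solution of the problem. -/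
open Real

theorem EKKT_sufficiency_weak_E_Pareto_generalized {n p m q : ℕ}
    (E : (Fin n → ℝ) → (Fin n → ℝ))
    (f : Fin p → (Fin n → ℝ) → ℝ) (g : Fin m → (Fin n → ℝ) → ℝ)
    (h : Fin q → (Fin n → ℝ) → ℝ)
    (η : (Fin n → ℝ) → (Fin n → ℝ) → (Fin n → ℝ))
    (hE : Function.Bijective E)
    (ΩE : Set (Fin n → ℝ))
    (hΩE : ΩE = {x | (∀ k, g k (E x) ≤ 0) ∧ ∀ j, h j (E x) = 0})
    (ybar : Fin n → ℝ) (hfeas : ybar ∈ ΩE)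
    (τbar : Fin p → ℝ) (ρbar : Fin m → ℝ) (ξbar : Fin q → ℝ)
    (hdf : ∀ i, DifferentiableAt ℝ (fun z => f i (E z)) ybar)
    (hdg : ∀ k, DifferentiableAt ℝ (fun z => g k (E z)) ybar)
    (hdh : ∀ j, DifferentiableAt ℝ (fun z => h j (E z)) ybar)
    (hstat : (∑ i, τbar i • fderiv ℝ (fun z => f i (E z)) ybar) +
        (∑ k, ρbar k • fderiv ℝ (fun z => g k (E z)) ybar) +
        (∑ j, ξbar j • fderiv ℝ (fun z => h j (E z)) ybar) = 0)
    (hslack : ∀ k, ρbar k * g k (E ybar) = 0)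
    (hτ : ∀ i, 0 ≤ τbar i) (hτne : τbar ≠ 0) (hρ : ∀ k, 0 ≤ ρbar k)
    (hfpseudo : ∀ i, ∀ x ∈ ΩE,
      exp (f i (E x)) < exp (f i (E ybar)) →
        fderiv ℝ (fun z => f i (E z)) ybar (η (E x) (E ybar)) *
          exp (f i (E ybar)) < 0)
    (hgquasi : ∀ k, g k (E ybar) = 0 → ∀ x ∈ ΩE,
      exp (g k (E x)) ≤ exp (g k (E ybar)) →
        fderiv ℝ (fun z => g k (E z)) ybar (η (E x) (E ybar)) *
          exp (g k (E ybar)) ≤ 0)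
    (hhquasi : ∀ j, 0 < ξbar j → ∀ x ∈ ΩE,
      exp (h j (E x)) ≤ exp (h j (E ybar)) →
        fderiv ℝ (fun z => h j (E z)) ybar (η (E x) (E ybar)) *
          exp (h j (E ybar)) ≤ 0)
    (hnhquasi : ∀ j, ξbar j < 0 → ∀ x ∈ ΩE,
      exp (-h j (E x)) ≤ exp (-h j (E ybar)) →
        fderiv ℝ (fun z => -h j (E z)) ybar (η (E x) (E ybar)) *
          exp (-h j (E ybar)) ≤ 0) :
    ¬ ∃ x ∈ ΩE, ∀ i, f i (E x) < f i (E ybar) := by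
  rintro ⟨x, hx, hlt⟩
  set v := η (E x) (E ybar) with hv
  -- apply the stationarity to v
  have h0 : (∑ i, τbar i * fderiv ℝ (fun z => f i (E z)) ybar v) +
      (∑ k, ρbar k * fderiv ℝ (fun z => g k (E z)) ybar v) +
      (∑ j, ξbar j * fderiv ℝ (fun z => h j (E z)) ybar v) = 0 := by
    have := congrArg (fun L : (Fin n → ℝ) →L[ℝ] ℝ => L v) hstat
    simpa [ContinuousLinearMap.add_apply, ContinuousLinearMap.sum_apply,
      ContinuousLinearMap.smul_apply, smul_eq_mul] using this
  -- f part strictly negative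
  have hτpos : ∃ i0, 0 < τbar i0 := by
    by_contra hc
    push_neg at hc
    exact hτne (funext fun i => le_antisymm (hc i) (hτ i))
  obtain ⟨i0, hi0⟩ := hτpos
  have hfneg : ∀ i, fderiv ℝ (fun z => f i (E z)) ybar v < 0 := by
    intro i
    have hexp := hfpseudo i x hx (exp_lt_exp.mpr (hlt i))
    nlinarith [exp_pos (f i (E ybar))]
  have hA : (∑ i, τbar i * fderiv ℝ (fun z => f i (E z)) ybar v) < 0 := by
    have := Finset.sum_lt_sum (f := fun i => τbar i * fderiv ℝ (fun z => f i (E z)) ybar v)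
      (g := fun _ => (0:ℝ)) (s := Finset.univ)
      (fun i _ => mul_nonpos_of_nonneg_of_nonpos (hτ i) (hfneg i).le)
      ⟨i0, Finset.mem_univ i0, mul_neg_of_pos_of_neg hi0 (hfneg i0)⟩
    simpa using this
  -- g part nonpositive
  have hB : (∑ k, ρbar k * fderiv ℝ (fun z => g k (E z)) ybar v) ≤ 0 := by
    apply Finset.sum_nonpos
    intro k _
    rcases eq_or_lt_of_le (hρ k) with hk | hk
    · simp [← hk]
    · have hact : g k (E ybar) = 0 := by
        have := hslack k
        nlinarith
      have hgx : g k (E x) ≤ 0 := by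
        rw [hΩE] at hx
        exact hx.1 k
      have := hgquasi k hact x hx (exp_le_exp.mpr (by rw [hact]; exact hgx))
      have hDg : fderiv ℝ (fun z => g k (E z)) ybar v ≤ 0 := by
        nlinarith [exp_pos (g k (E ybar))]
      exact mul_nonpos_of_nonneg_of_nonpos (hρ k) hDg
  -- h part nonpositive
  have hheq : ∀ j, h j (E x) = h j (E ybar) := by
    intro j
    rw [hΩE] at hx hfeas
    rw [hx.2 j, hfeas.2 j]
  have hC : (∑ j, ξbar j * fderiv ℝ (fun z => h j (E z)) ybar v) ≤ 0 := by
    apply Finset.sum_nonpos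
    intro j _
    rcases lt_trichotomy (ξbar j) 0 with hj | hj | hj
    · have := hnhquasi j hj x hx (le_of_eq (by rw [hheq j]))
      rw [show (fun z => -h j (E z)) = fun z => -(fun z => h j (E z)) z from rfl,
        fderiv_fun_neg] at this
      simp only [ContinuousLinearMap.neg_apply] at this
      have hDh : 0 ≤ fderiv ℝ (fun z => h j (E z)) ybar v := by
        nlinarith [exp_pos (-h j (E ybar))]
      exact mul_nonpos_of_nonpos_of_nonneg hj.le hDh
    · simp [hj]
    · have := hhquasi j hj x hx (le_of_eq (by rw [hheq j]))
      have hDh : fderiv ℝ (fun z => h j (E z)) ybar v ≤ 0 := by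
        nlinarith [exp_pos (h j (E ybar))]
      exact mul_nonpos_of_nonneg_of_nonpos hj.le hDh
  linarith
end
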